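/- arXiv:1409.3214 — 2 statements merged into one kernel-verified Lean document; each statement's English description precedes it below -/
import Mathlib

section
/- Let L, M be complex polynomials with deg M < deg L =: ℓ, such that L(ik) is purely imaginary for all real k. Set q = ℓ - deg M. Then for every T > 0 there is a constant C > 0 such that for all d with 0 < d ≤ T and all real k, |d·M(ik) / (1 - d·L(ik))| ≤ C · d^{q/ℓ}. -/
open Complex
open Polynomial Finset

noncomputable def coefSum (p : Polynomial ℂ) : ℝ :=
  ∑ i ∈ Finset.range (p.natDegree + 1), ‖p.coeff i‖

lemma coefSum_nonneg (p : Polynomial ℂ) : 0 ≤ coefSum p :=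
  Finset.sum_nonneg fun _ _ => norm_nonneg _

lemma eval_abs_le (p : Polynomial ℂ) (z : ℂ) :
    ‖p.eval z‖ ≤ coefSum p * max 1 (‖z‖) ^ p.natDegree := by
  rw [Polynomial.eval_eq_sum_range, coefSum, Finset.sum_mul]
  refine le_trans (norm_sum_le _ _) (Finset.sum_le_sum fun i hi => ?_)
  rw [norm_mul, norm_pow]
  refine mul_le_mul_of_nonneg_left ?_ (norm_nonneg _)
  calc ‖z‖ ^ i ≤ max 1 (‖z‖) ^ i :=
        pow_le_pow_left₀ (norm_nonneg _) (le_max_right _ _) _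
    _ ≤ max 1 (‖z‖) ^ p.natDegree :=
        pow_le_pow_right₀ (le_max_left _ _) (Nat.lt_succ_iff.mp (Finset.mem_range.mp hi))

lemma eval_abs_ge (p : Polynomial ℂ) (hp : 1 ≤ p.natDegree) (z : ℂ)
    (hz1 : 1 ≤ ‖z‖)
    (hz2 : 2 * coefSum p.eraseLead ≤ ‖p.leadingCoeff‖ * ‖z‖) :
    ‖p.leadingCoeff‖ / 2 * ‖z‖ ^ p.natDegree ≤ ‖p.eval z‖ := by
  have hzpos : (0:ℝ) < ‖z‖ := lt_of_lt_of_le one_pos hz1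
  have hmax : max 1 (‖z‖) = ‖z‖ := max_eq_right hz1
  have hsplit : p.eval z = p.eraseLead.eval z + p.leadingCoeff * z ^ p.natDegree := by
    have h := congrArg (Polynomial.eval z) (Polynomial.eraseLead_add_C_mul_X_pow p)
    rw [Polynomial.eval_add, Polynomial.eval_mul, Polynomial.eval_C, Polynomial.eval_pow,
      Polynomial.eval_X] at h
    exact h.symm
  have htri : ‖p.leadingCoeff * z ^ p.natDegree‖
      ≤ ‖p.eval z‖ + ‖p.eraseLead.eval z‖ := by
    have h := norm_add_le (p.eval z) (-(p.eraseLead.eval z))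
    rw [norm_neg] at h
    refine le_trans (le_of_eq ?_) h
    rw [hsplit]; ring_nf
  have hE : ‖p.eraseLead.eval z‖
      ≤ coefSum p.eraseLead * ‖z‖ ^ (p.natDegree - 1) := by
    refine le_trans (eval_abs_le _ z) ?_
    rw [hmax]
    refine mul_le_mul_of_nonneg_left ?_ (coefSum_nonneg _)
    exact pow_le_pow_right₀ hz1 (le_trans (Polynomial.eraseLead_natDegree_le p) (le_refl _))
  have hpowpos : (0:ℝ) < ‖z‖ ^ (p.natDegree - 1) := pow_pos hzpos _
  have hsucc : ‖z‖ ^ (p.natDegree - 1) * ‖z‖ = ‖z‖ ^ p.natDegree := by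
    rw [← pow_succ, Nat.sub_add_cancel hp]
  have habs : ‖p.leadingCoeff * z ^ p.natDegree‖
      = ‖p.leadingCoeff‖ * ‖z‖ ^ p.natDegree := by
    rw [norm_mul, norm_pow]
  have key : coefSum p.eraseLead * ‖z‖ ^ (p.natDegree - 1)
      ≤ ‖p.leadingCoeff‖ / 2 * ‖z‖ ^ p.natDegree := by
    rw [← hsucc]
    calc coefSum p.eraseLead * ‖z‖ ^ (p.natDegree - 1)
        ≤ (‖p.leadingCoeff‖ * ‖z‖ / 2) * ‖z‖ ^ (p.natDegree - 1) := by
          apply mul_le_mul_of_nonneg_right (by linarith) (le_of_lt hpowpos)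
      _ = ‖p.leadingCoeff‖ / 2 * (‖z‖ ^ (p.natDegree - 1) * ‖z‖) := by
          ring
  nlinarith [habs, htri, hE, key]

lemma rpow_le_of_le (x y β : ℝ) (hx : 0 ≤ x) (hβ0 : 0 ≤ β) (hβ1 : β ≤ 1)
    (hy1 : 1 ≤ y) (hxy : x ≤ y) : x ^ β ≤ y := by
  rcases le_total x 1 with h | h
  · exact le_trans (Real.rpow_le_one hx h hβ0) hy1
  · calc x ^ β ≤ x ^ (1:ℝ) := Real.rpow_le_rpow_of_exponent_le h hβ1
      _ = x := Real.rpow_one x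
      _ ≤ y := hxy

/-- If `deg M < deg L = ℓ`, `q = ℓ - deg M`, and `L(ik)` is purely imaginary for all
real `k`, then for every `T > 0` there is `C > 0` with
`|d·M(ik)/(1 - d·L(ik))| ≤ C·d^(q/ℓ)` for all `0 < d ≤ T` and all real `k`. -/
theorem stmt_4 (L M : Polynomial ℂ) (hdeg : M.degree < L.degree)
    (him : ∀ k : ℝ, (L.eval (Complex.I * k)).re = 0) :
    ∀ T > (0 : ℝ), ∃ C > (0 : ℝ), ∀ d : ℝ, 0 < d → d ≤ T → ∀ k : ℝ,
      ‖(d : ℂ) * M.eval (Complex.I * k) /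
          (1 - (d : ℂ) * L.eval (Complex.I * k))‖ ≤
        C * d ^ (((L.natDegree : ℝ) - (M.natDegree : ℝ)) / (L.natDegree : ℝ)) := by
  intro T hT
  set α : ℝ := (((L.natDegree : ℝ) - (M.natDegree : ℝ)) / (L.natDegree : ℝ)) with hα
  -- trivial case M = 0
  by_cases hM : M = 0
  · refine ⟨1, one_pos, fun d hd hdT k => ?_⟩
    have : (0:ℝ) ≤ d ^ α := Real.rpow_nonneg hd.le α
    simp [hM, this]
  -- main case
  have hL0 : L ≠ 0 := by
    intro h
    rw [h, Polynomial.degree_zero] at hdeg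
    exact not_lt_bot hdeg
  have hmn : M.natDegree < L.natDegree := Polynomial.natDegree_lt_natDegree hM hdeg
  have hℓpos : 0 < L.natDegree := lt_of_le_of_lt (Nat.zero_le _) hmn
  have hℓR : (0:ℝ) < (L.natDegree : ℝ) := by exact_mod_cast hℓpos
  have hmnR : (M.natDegree : ℝ) < (L.natDegree : ℝ) := by exact_mod_cast hmn
  have hα0 : 0 < α := div_pos (by linarith) hℓR
  have hα1 : α ≤ 1 := by
    rw [hα, div_le_one hℓR]
    have : (0:ℝ) ≤ (M.natDegree : ℝ) := Nat.cast_nonneg _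
    linarith
  -- constants
  set b : ℝ := ‖L.leadingCoeff‖ with hbdef
  have hb : 0 < b := by
    rw [hbdef]
    simpa using (Polynomial.leadingCoeff_ne_zero.mpr hL0)
  set c1 : ℝ := coefSum M with hc1def
  have hc1 : 0 < c1 := by
    rw [hc1def, coefSum]
    refine Finset.sum_pos' (fun i _ => norm_nonneg _) ⟨M.natDegree, Finset.self_mem_range_succ _, ?_⟩
    exact norm_pos_iff.mpr (Polynomial.leadingCoeff_ne_zero.mpr hM)
  set cE : ℝ := coefSum L.eraseLead with hcEdef
  have hcE : 0 ≤ cE := coefSum_nonneg _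
  set c2 : ℝ := b / 2 with hc2def
  have hc2 : 0 < c2 := by positivity
  set R : ℝ := max 1 (2 * cE / b) with hRdef
  have hR1 : 1 ≤ R := le_max_left _ _
  have hR0 : 0 < R := lt_of_lt_of_le one_pos hR1
  set A : ℝ := c1 * R ^ M.natDegree * T ^ (1 - α) with hAdef
  set B : ℝ := c1 / c2 ^ (1 - α) with hBdef
  have hA : 0 < A := by
    rw [hAdef]
    have := Real.rpow_pos_of_pos hT (1 - α)
    positivity
  have hB : 0 < B := by
    rw [hBdef]
    have := Real.rpow_pos_of_pos hc2 (1 - α)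
    positivity
  refine ⟨max A B, lt_of_lt_of_le hA (le_max_left _ _), fun d hd hdT k => ?_⟩
  have hdα : (0:ℝ) < d ^ α := Real.rpow_pos_of_pos hd α
  set z : ℂ := Complex.I * (k : ℂ) with hzdef
  set K : ℝ := |k| with hKdef
  have hKz : ‖z‖ = K := by
    rw [hzdef, norm_mul, Complex.norm_I, Complex.norm_real, Real.norm_eq_abs, one_mul]
  have hK0 : 0 ≤ K := abs_nonneg _
  -- denominator bounds
  set w : ℂ := 1 - (d : ℂ) * L.eval z with hwdef
  have hre0 : (L.eval z).re = 0 := by rw [hzdef]; exact him k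
  have hwre : w.re = 1 := by
    rw [hwdef, Complex.sub_re, Complex.one_re, Complex.mul_re, Complex.ofReal_re,
      Complex.ofReal_im, hre0]
    ring
  have hw1 : 1 ≤ ‖w‖ := by
    calc (1:ℝ) = |w.re| := by rw [hwre]; norm_num
      _ ≤ ‖w‖ := Complex.abs_re_le_norm w
  have hw0 : 0 < ‖w‖ := lt_of_lt_of_le one_pos hw1
  have haL : ‖L.eval z‖ = |(L.eval z).im| := by
    rw [Complex.norm_def, Complex.normSq_apply, hre0]
    norm_num [Real.sqrt_mul_self_eq_abs]
  have hw2 : d * ‖L.eval z‖ ≤ ‖w‖ := by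
    have hwim : w.im = -(d * (L.eval z).im) := by
      rw [hwdef]; simp [Complex.sub_im, Complex.mul_im]
    calc d * ‖L.eval z‖ = |w.im| := by
          rw [hwim, haL, abs_neg, abs_mul, abs_of_pos hd]
      _ ≤ ‖w‖ := Complex.abs_im_le_norm w
  -- numerator bound
  have hnum : ‖(d:ℂ) * M.eval z‖ = d * ‖M.eval z‖ := by
    rw [norm_mul, Complex.norm_real, Real.norm_eq_abs, abs_of_pos hd]
  set aM : ℝ := ‖M.eval z‖ with haMdef
  have haM0 : 0 ≤ aM := norm_nonneg _
  have hQeq : ‖(d:ℂ) * M.eval z / w‖ = d * aM / ‖w‖ := by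
    rw [norm_div, hnum]
  rw [hQeq]
  have haMle : aM ≤ c1 * max 1 K ^ M.natDegree := by
    rw [haMdef, hc1def, ← hKz]; exact eval_abs_le M z
  rcases le_or_gt K R with hKR | hKR
  · -- small |k|
    have h1 : d * aM / ‖w‖ ≤ d * aM := by
      apply div_le_self (by positivity) hw1
    have h2 : aM ≤ c1 * R ^ M.natDegree := by
      refine le_trans haMle (mul_le_mul_of_nonneg_left ?_ hc1.le)
      exact pow_le_pow_left₀ (le_trans zero_le_one (le_max_left _ _)) (max_le hR1 hKR) _
    have hd1 : d ^ (1 - α) * d ^ α = d := by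
      rw [← Real.rpow_add hd]; norm_num
    have hdT' : d ^ (1 - α) ≤ T ^ (1 - α) :=
      Real.rpow_le_rpow hd.le hdT (by linarith)
    calc d * aM / ‖w‖ ≤ d * (c1 * R ^ M.natDegree) :=
          le_trans h1 (mul_le_mul_of_nonneg_left h2 hd.le)
      _ = d ^ (1 - α) * (c1 * R ^ M.natDegree) * d ^ α := by
          linear_combination (-(c1 * R ^ M.natDegree)) * hd1
      _ ≤ T ^ (1 - α) * (c1 * R ^ M.natDegree) * d ^ α := by
          have : (0:ℝ) ≤ c1 * R ^ M.natDegree := by positivity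
          have := mul_le_mul_of_nonneg_right (mul_le_mul_of_nonneg_right hdT' this) hdα.le
          linarith
      _ = A * d ^ α := by rw [hAdef]; ring
      _ ≤ max A B * d ^ α := mul_le_mul_of_nonneg_right (le_max_left _ _) hdα.le
  · -- large |k|
    have hK1 : 1 ≤ K := le_trans hR1 hKR.le
    have hKpos : 0 < K := lt_of_lt_of_le one_pos hK1
    have hz2 : 2 * cE ≤ b * K := by
      have : 2 * cE / b ≤ K := le_trans (le_max_right 1 _) hKR.le
      calc 2 * cE = b * (2 * cE / b) := by field_simp
        _ ≤ b * K := mul_le_mul_of_nonneg_left this hb.le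
    have haL2 : c2 * K ^ L.natDegree ≤ ‖L.eval z‖ := by
      have := eval_abs_ge L hℓpos z (by rw [hKz]; exact hK1) (by rw [hKz]; exact hz2)
      rw [hKz] at this
      exact this
    -- denominator ≥ (d * c2 * K^ℓ)^(1-α)
    have hden : (d * (c2 * K ^ L.natDegree)) ^ (1 - α) ≤ ‖w‖ := by
      apply rpow_le_of_le _ _ _ (by positivity) (by linarith) (by linarith) hw1
      calc d * (c2 * K ^ L.natDegree) ≤ d * ‖L.eval z‖ :=
            mul_le_mul_of_nonneg_left haL2 hd.le
        _ ≤ ‖w‖ := hw2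
    -- rewrite (K^ℓ)^(1-α) = K^m
    have hexp : (L.natDegree : ℝ) * (1 - α) = (M.natDegree : ℝ) := by
      rw [hα]; field_simp; ring
    have hKpow : (K ^ L.natDegree : ℝ) ^ (1 - α) = K ^ M.natDegree := by
      rw [← Real.rpow_natCast K L.natDegree, ← Real.rpow_mul hK0, hexp, Real.rpow_natCast]
    have hden' : d ^ (1 - α) * (c2 ^ (1 - α) * K ^ M.natDegree) ≤ ‖w‖ := by
      refine le_trans (le_of_eq ?_) hden
      rw [Real.mul_rpow hd.le (by positivity), Real.mul_rpow hc2.le (by positivity), hKpow]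
    have hmaxK : max 1 K = K := max_eq_right hK1
    have haMle' : aM ≤ c1 * K ^ M.natDegree := by rwa [hmaxK] at haMle
    have hdenpos : (0:ℝ) < d ^ (1 - α) * (c2 ^ (1 - α) * K ^ M.natDegree) := by
      have h1 := Real.rpow_pos_of_pos hd (1 - α)
      have h2 := Real.rpow_pos_of_pos hc2 (1 - α)
      positivity
    have hfrac : d * aM / ‖w‖ ≤
        (d * (c1 * K ^ M.natDegree)) / (d ^ (1 - α) * (c2 ^ (1 - α) * K ^ M.natDegree)) := by
      apply div_le_div₀ (by positivity) (mul_le_mul_of_nonneg_left haMle' hd.le) hdenpos hden'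
    have heq : (d * (c1 * K ^ M.natDegree)) / (d ^ (1 - α) * (c2 ^ (1 - α) * K ^ M.natDegree))
        = B * d ^ α := by
      have hd1 : d ^ α * d ^ (1 - α) = d := by
        rw [← Real.rpow_add hd]; norm_num
      have hne2 : c2 ^ (1 - α) ≠ 0 := (Real.rpow_pos_of_pos hc2 _).ne'
      have hc2cancel : c1 / c2 ^ (1 - α) * c2 ^ (1 - α) = c1 := div_mul_cancel₀ _ hne2
      rw [div_eq_iff hdenpos.ne']
      calc d * (c1 * K ^ M.natDegree)
          = c1 * (d * K ^ M.natDegree) := by ring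
        _ = (c1 / c2 ^ (1 - α) * c2 ^ (1 - α)) * ((d ^ α * d ^ (1 - α)) * K ^ M.natDegree) := by
            rw [hc2cancel, hd1]
        _ = B * d ^ α * (d ^ (1 - α) * (c2 ^ (1 - α) * K ^ M.natDegree)) := by
            rw [hBdef]; ring
    calc d * aM / ‖w‖ ≤ B * d ^ α := by rw [← heq]; exact hfrac
      _ ≤ max A B * d ^ α := mul_le_mul_of_nonneg_right (le_max_right _ _) hdα.le
end

section
/- If u, v : ℝ² → ℝ are C² functions satisfying the system u_t = v_x + 2 sin(u/2) cos(v/2) and v_t = u_x - 2 cos(u/2) sin(v/2), then u satisfies the Sine-Gordon equation u_tt = u_xx + sin(u). -/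
open Real

private lemma slice_t {E : Type*} [NormedAddCommGroup E] [NormedSpace ℝ E]
    (F : ℝ × ℝ → E) (hF : Differentiable ℝ F) (x t : ℝ) :
    HasDerivAt (fun τ => F (x, τ)) (fderiv ℝ F (x, t) (0, 1)) t :=
  (hF (x, t)).hasFDerivAt.comp_hasDerivAt t
    ((hasDerivAt_const t x).prodMk (hasDerivAt_id t))

private lemma slice_x {E : Type*} [NormedAddCommGroup E] [NormedSpace ℝ E]
    (F : ℝ × ℝ → E) (hF : Differentiable ℝ F) (x t : ℝ) :
    HasDerivAt (fun ξ => F (ξ, t)) (fderiv ℝ F (x, t) (1, 0)) x :=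
  (hF (x, t)).hasFDerivAt.comp_hasDerivAt x
    ((hasDerivAt_id x).prodMk (hasDerivAt_const x t))

private lemma mixed_t (F : ℝ × ℝ → ℝ) (hF : ContDiff ℝ 2 F) (x t : ℝ) (w : ℝ × ℝ) :
    HasDerivAt (fun τ => fderiv ℝ F (x, τ) w)
      (fderiv ℝ (fderiv ℝ F) (x, t) (0, 1) w) t := by
  have hg : Differentiable ℝ (fderiv ℝ F) :=
    (hF.fderiv_right (m := 1) (by norm_num)).differentiable one_ne_zero
  have h := (slice_t (fderiv ℝ F) hg x t).clm_apply (hasDerivAt_const t w)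
  simpa using h

private lemma mixed_x (F : ℝ × ℝ → ℝ) (hF : ContDiff ℝ 2 F) (x t : ℝ) (w : ℝ × ℝ) :
    HasDerivAt (fun ξ => fderiv ℝ F (ξ, t) w)
      (fderiv ℝ (fderiv ℝ F) (x, t) (1, 0) w) x := by
  have hg : Differentiable ℝ (fderiv ℝ F) :=
    (hF.fderiv_right (m := 1) (by norm_num)).differentiable one_ne_zero
  have h := (slice_x (fderiv ℝ F) hg x t).clm_apply (hasDerivAt_const x w)
  simpa using h

/-- If `u, v : ℝ² → ℝ` are `C²` and satisfy `u_t = v_x + 2 sin(u/2) cos(v/2)` and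
`v_t = u_x - 2 cos(u/2) sin(v/2)`, then `u` satisfies the Sine-Gordon equation
`u_tt = u_xx + sin u`.  Here `u x t` denotes `u(x,t)`. -/
theorem stmt_14 (u v : ℝ → ℝ → ℝ)
    (hu : ContDiff ℝ 2 (Function.uncurry u)) (hv : ContDiff ℝ 2 (Function.uncurry v))
    (heq1 : ∀ x t : ℝ, deriv (fun τ => u x τ) t =
      deriv (fun ξ => v ξ t) x + 2 * Real.sin (u x t / 2) * Real.cos (v x t / 2))
    (heq2 : ∀ x t : ℝ, deriv (fun τ => v x τ) t =
      deriv (fun ξ => u ξ t) x - 2 * Real.cos (u x t / 2) * Real.sin (v x t / 2)) :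
    ∀ x t : ℝ, deriv (fun τ => deriv (fun τ' => u x τ') τ) t =
      deriv (fun ξ => deriv (fun ξ' => u ξ' t) ξ) x + Real.sin (u x t) := by
  intro x t
  set U := Function.uncurry u with hUdef
  set V := Function.uncurry v with hVdef
  have hUd : Differentiable ℝ U := hu.differentiable (by norm_num)
  have hVd : Differentiable ℝ V := hv.differentiable (by norm_num)
  have hut : ∀ a b : ℝ, deriv (fun τ => u a τ) b = fderiv ℝ U (a, b) (0, 1) :=
    fun a b => (slice_t U hUd a b).deriv
  have hux : ∀ a b : ℝ, deriv (fun ξ => u ξ b) a = fderiv ℝ U (a, b) (1, 0) :=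
    fun a b => (slice_x U hUd a b).deriv
  have hvt : ∀ a b : ℝ, deriv (fun τ => v a τ) b = fderiv ℝ V (a, b) (0, 1) :=
    fun a b => (slice_t V hVd a b).deriv
  have hvx : ∀ a b : ℝ, deriv (fun ξ => v ξ b) a = fderiv ℝ V (a, b) (1, 0) :=
    fun a b => (slice_x V hVd a b).deriv
  have hSu : HasDerivAt (fun τ => Real.sin (u x τ / 2))
      (Real.cos (u x t / 2) * (fderiv ℝ U (x, t) (0, 1) / 2)) t :=
    ((slice_t U hUd x t).div_const 2).sin
  have hCv : HasDerivAt (fun τ => Real.cos (v x τ / 2))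
      (-Real.sin (v x t / 2) * (fderiv ℝ V (x, t) (0, 1) / 2)) t :=
    ((slice_t V hVd x t).div_const 2).cos
  have hR1 : HasDerivAt
      (fun τ => fderiv ℝ V (x, τ) (1, 0) + 2 * Real.sin (u x τ / 2) * Real.cos (v x τ / 2))
      (fderiv ℝ (fderiv ℝ V) (x, t) (0, 1) (1, 0)
        + ((2 * (Real.cos (u x t / 2) * (fderiv ℝ U (x, t) (0, 1) / 2))) * Real.cos (v x t / 2)
        + 2 * Real.sin (u x t / 2) * (-Real.sin (v x t / 2) * (fderiv ℝ V (x, t) (0, 1) / 2)))) t :=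
    (mixed_t V hv x t (1, 0)).add ((hSu.const_mul 2).mul hCv)
  have hfun1 : (fun τ => fderiv ℝ U (x, τ) (0, 1)) =
      (fun τ => fderiv ℝ V (x, τ) (1, 0) + 2 * Real.sin (u x τ / 2) * Real.cos (v x τ / 2)) := by
    funext τ
    rw [← hut x τ, ← hvx x τ]
    exact heq1 x τ
  have hutt : deriv (fun τ => deriv (fun τ' => u x τ') τ) t =
      fderiv ℝ (fderiv ℝ V) (x, t) (0, 1) (1, 0)
        + ((2 * (Real.cos (u x t / 2) * (fderiv ℝ U (x, t) (0, 1) / 2))) * Real.cos (v x t / 2)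
        + 2 * Real.sin (u x t / 2) * (-Real.sin (v x t / 2) * (fderiv ℝ V (x, t) (0, 1) / 2))) := by
    have h : (fun τ => deriv (fun τ' => u x τ') τ) = (fun τ => fderiv ℝ U (x, τ) (0, 1)) :=
      funext fun τ => hut x τ
    rw [h, hfun1]
    exact hR1.deriv
  have hCu : HasDerivAt (fun ξ => Real.cos (u ξ t / 2))
      (-Real.sin (u x t / 2) * (fderiv ℝ U (x, t) (1, 0) / 2)) x :=
    ((slice_x U hUd x t).div_const 2).cos
  have hSv : HasDerivAt (fun ξ => Real.sin (v ξ t / 2))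
      (Real.cos (v x t / 2) * (fderiv ℝ V (x, t) (1, 0) / 2)) x :=
    ((slice_x V hVd x t).div_const 2).sin
  have hR2 : HasDerivAt
      (fun ξ => fderiv ℝ U (ξ, t) (1, 0) - 2 * Real.cos (u ξ t / 2) * Real.sin (v ξ t / 2))
      (fderiv ℝ (fderiv ℝ U) (x, t) (1, 0) (1, 0)
        - ((2 * (-Real.sin (u x t / 2) * (fderiv ℝ U (x, t) (1, 0) / 2))) * Real.sin (v x t / 2)
        + 2 * Real.cos (u x t / 2) * (Real.cos (v x t / 2) * (fderiv ℝ V (x, t) (1, 0) / 2)))) x :=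
    (mixed_x U hu x t (1, 0)).sub ((hCu.const_mul 2).mul hSv)
  have hfun2 : (fun ξ => fderiv ℝ V (ξ, t) (0, 1)) =
      (fun ξ => fderiv ℝ U (ξ, t) (1, 0) - 2 * Real.cos (u ξ t / 2) * Real.sin (v ξ t / 2)) := by
    funext ξ
    rw [← hvt ξ t, ← hux ξ t]
    exact heq2 ξ t
  have hvtx : fderiv ℝ (fderiv ℝ V) (x, t) (1, 0) (0, 1) =
      fderiv ℝ (fderiv ℝ U) (x, t) (1, 0) (1, 0)
        - ((2 * (-Real.sin (u x t / 2) * (fderiv ℝ U (x, t) (1, 0) / 2))) * Real.sin (v x t / 2)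
        + 2 * Real.cos (u x t / 2) * (Real.cos (v x t / 2) * (fderiv ℝ V (x, t) (1, 0) / 2))) := by
    have h1 := (mixed_x V hv x t (0, 1)).deriv
    rw [hfun2] at h1
    rw [← h1]
    exact hR2.deriv
  have hsym : fderiv ℝ (fderiv ℝ V) (x, t) (0, 1) (1, 0) =
      fderiv ℝ (fderiv ℝ V) (x, t) (1, 0) (0, 1) :=
    (hv.contDiffAt.isSymmSndFDerivAt (by simp)) (0, 1) (1, 0)
  have huxx : deriv (fun ξ => deriv (fun ξ' => u ξ' t) ξ) x =
      fderiv ℝ (fderiv ℝ U) (x, t) (1, 0) (1, 0) := by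
    have h : (fun ξ => deriv (fun ξ' => u ξ' t) ξ) = (fun ξ => fderiv ℝ U (ξ, t) (1, 0)) :=
      funext fun ξ => hux ξ t
    rw [h]
    exact (mixed_x U hu x t (1, 0)).deriv
  have e1 := heq1 x t
  rw [hut x t, hvx x t] at e1
  have e2 := heq2 x t
  rw [hvt x t, hux x t] at e2
  have hsin : Real.sin (u x t) = 2 * Real.sin (u x t / 2) * Real.cos (u x t / 2) := by
    rw [← Real.sin_two_mul]; ring_nf
  have hpyth : Real.sin (v x t / 2) ^ 2 + Real.cos (v x t / 2) ^ 2 = 1 :=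
    Real.sin_sq_add_cos_sq _
  rw [hutt, huxx, hsym, hvtx, e1, e2, hsin]
  linear_combination (2 * Real.sin (u x t / 2) * Real.cos (u x t / 2)) * hpyth
end
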